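/- Let F_3 be the field with three elements and write x_1 = (x,y), x_2 = (w,z), x_3 = (u,v) ∈ F_3^2. Define the F_3-linear maps f_1,…,f_9 : (F_3^2)^3 → F_3^2 by f_1(X) = (x,y), f_2(X) = (x+w, y+z), f_3(X) = (w,z), f_4(X) = (x+u+2z, y+2v+w+z), f_5(X) = (u,v), f_6(X) = (x+2u+2v+2z, y+u+w+z), f_7(X) = (x+v, y+u+2v), f_8(X) = (x+u+w+z, y+2v+w), f_9(X) = (u+w, v+z). Then for every 3-element subset {i,j,k} of {1,…,9}: if {i,j,k} ∉ S0, the linear map (x_1,x_2,x_3) ↦ (f_i(X), f_j(X), f_k(X)) from (F_3^2)^3 to (F_3^2)^3 is bijective; and if {i,j,k} ∈ S0, the six component linear functionals of f_i, f_j, f_k span a subspace of dimension at most 4 of the dual space of F_3^6. Thus f_1,…,f_9 form a multilinear (partition) representation of the non-Pappus matroid over F_3 with blocks of dimension 2. -/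

import Mathlib

/-- The collection `S0` of dependent 3-element subsets (3-point lines) of the
non-Pappus matroid on the ground set `{1, …, 9}` (here indexed by `Fin 9`, so that
the paper's element `i` corresponds to `i - 1`):
`S0 = {{1,2,3},{1,5,7},{3,5,9},{2,4,7},{4,5,6},{2,6,9},{1,6,8},{3,4,8}}`. -/
def S0 : Finset (Finset (Fin 9)) :=
  {{0, 1, 2}, {0, 4, 6}, {2, 4, 8}, {1, 3, 6}, {3, 4, 5}, {1, 5, 8}, {0, 5, 7}, {2, 3, 7}}

/-- The nine maps `f_1, …, f_9 : (F_3^2)^3 → F_3^2` of the multilinear representation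
of the non-Pappus matroid over `F_3`.  Writing `x_1 = (x, y)`, `x_2 = (w, z)`,
`x_3 = (u, v)` (so `x = X 0 0`, `y = X 0 1`, `w = X 1 0`, `z = X 1 1`, `u = X 2 0`,
`v = X 2 1`), these are
`f_1(X) = (x, y)`, `f_2(X) = (x+w, y+z)`, `f_3(X) = (w, z)`,
`f_4(X) = (x+u+2z, y+2v+w+z)`, `f_5(X) = (u, v)`,
`f_6(X) = (x+2u+2v+2z, y+u+w+z)`, `f_7(X) = (x+v, y+u+2v)`,
`f_8(X) = (x+u+w+z, y+2v+w)`, `f_9(X) = (u+w, v+z)`. -/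
def nonPappusMap : Fin 9 → (Fin 3 → Fin 2 → ZMod 3) → (Fin 2 → ZMod 3) :=
  ![fun X => ![X 0 0, X 0 1],
    fun X => ![X 0 0 + X 1 0, X 0 1 + X 1 1],
    fun X => ![X 1 0, X 1 1],
    fun X => ![X 0 0 + X 2 0 + 2 * X 1 1, X 0 1 + 2 * X 2 1 + X 1 0 + X 1 1],
    fun X => ![X 2 0, X 2 1],
    fun X => ![X 0 0 + 2 * X 2 0 + 2 * X 2 1 + 2 * X 1 1, X 0 1 + X 2 0 + X 1 0 + X 1 1],
    fun X => ![X 0 0 + X 2 1, X 0 1 + X 2 0 + 2 * X 2 1],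
    fun X => ![X 0 0 + X 2 0 + X 1 0 + X 1 1, X 0 1 + 2 * X 2 1 + X 1 0],
    fun X => ![X 2 0 + X 1 0, X 2 1 + X 1 1]]

/-! ### Auxiliary scalar version of the maps -/

def npG : Fin 9 → ZMod 3 → ZMod 3 → ZMod 3 → ZMod 3 → ZMod 3 → ZMod 3 → ZMod 3 × ZMod 3 :=
  ![fun x y _ _ _ _ => (x, y),
    fun x y w z _ _ => (x + w, y + z),
    fun _ _ w z _ _ => (w, z),
    fun x y w z u v => (x + u + 2*z, y + 2*v + w + z),
    fun _ _ _ _ u v => (u, v),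
    fun x y w z u v => (x + 2*u + 2*v + 2*z, y + u + w + z),
    fun x y _ _ u v => (x + v, y + u + 2*v),
    fun x y w z u v => (x + u + w + z, y + 2*v + w),
    fun _ _ w z u v => (u + w, v + z)]

@[reducible] def npP (i j k : Fin 9) : Prop := ∀ x y w z u v : ZMod 3,
  npG i x y w z u v = 0 → npG j x y w z u v = 0 → npG k x y w z u v = 0 →
  (x = 0 ∧ y = 0 ∧ w = 0 ∧ z = 0 ∧ u = 0 ∧ v = 0)

def npL0 : List (Fin 9 × Fin 9 × Fin 9) := [(0,1,3), (0,1,4), (0,1,5), (0,1,6), (0,1,7), (0,1,8), (0,2,3), (0,2,4), (0,2,5), (0,2,6)]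
def npL1 : List (Fin 9 × Fin 9 × Fin 9) := [(0,2,7), (0,2,8), (0,3,4), (0,3,5), (0,3,6), (0,3,7), (0,3,8), (0,4,5), (0,4,7), (0,4,8)]
def npL2 : List (Fin 9 × Fin 9 × Fin 9) := [(0,5,6), (0,5,8), (0,6,7), (0,6,8), (0,7,8), (1,2,3), (1,2,4), (1,2,5), (1,2,6), (1,2,7)]
def npL3 : List (Fin 9 × Fin 9 × Fin 9) := [(1,2,8), (1,3,4), (1,3,5), (1,3,7), (1,3,8), (1,4,5), (1,4,6), (1,4,7), (1,4,8), (1,5,6)]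
def npL4 : List (Fin 9 × Fin 9 × Fin 9) := [(1,5,7), (1,6,7), (1,6,8), (1,7,8), (2,3,4), (2,3,5), (2,3,6), (2,3,8), (2,4,5), (2,4,6)]
def npL5 : List (Fin 9 × Fin 9 × Fin 9) := [(2,4,7), (2,5,6), (2,5,7), (2,5,8), (2,6,7), (2,6,8), (2,7,8), (3,4,6), (3,4,7), (3,4,8)]
def npL6 : List (Fin 9 × Fin 9 × Fin 9) := [(3,5,6), (3,5,7), (3,5,8), (3,6,7), (3,6,8), (3,7,8), (4,5,6), (4,5,7), (4,5,8), (4,6,7)]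
def npL7 : List (Fin 9 × Fin 9 × Fin 9) := [(4,6,8), (4,7,8), (5,6,7), (5,6,8), (5,7,8), (6,7,8)]
def npLall : List (Fin 9 × Fin 9 × Fin 9) := npL0 ++ npL1 ++ npL2 ++ npL3 ++ npL4 ++ npL5 ++ npL6 ++ npL7

set_option synthInstance.maxSize 4000 in
set_option synthInstance.maxHeartbeats 1000000 in
set_option maxRecDepth 1000000 in
set_option maxHeartbeats 4000000 in
theorem npChunk0 : ∀ i j k : Fin 9, (i,j,k) ∈ npL0 → npP i j k := by decide

set_option synthInstance.maxSize 4000 in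
set_option synthInstance.maxHeartbeats 1000000 in
set_option maxRecDepth 1000000 in
set_option maxHeartbeats 4000000 in
theorem npChunk1 : ∀ i j k : Fin 9, (i,j,k) ∈ npL1 → npP i j k := by decide

set_option synthInstance.maxSize 4000 in
set_option synthInstance.maxHeartbeats 1000000 in
set_option maxRecDepth 1000000 in
set_option maxHeartbeats 4000000 in
theorem npChunk2 : ∀ i j k : Fin 9, (i,j,k) ∈ npL2 → npP i j k := by decide

set_option synthInstance.maxSize 4000 in
set_option synthInstance.maxHeartbeats 1000000 in
set_option maxRecDepth 1000000 in
set_option maxHeartbeats 4000000 in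
theorem npChunk3 : ∀ i j k : Fin 9, (i,j,k) ∈ npL3 → npP i j k := by decide

set_option synthInstance.maxSize 4000 in
set_option synthInstance.maxHeartbeats 1000000 in
set_option maxRecDepth 1000000 in
set_option maxHeartbeats 4000000 in
theorem npChunk4 : ∀ i j k : Fin 9, (i,j,k) ∈ npL4 → npP i j k := by decide

set_option synthInstance.maxSize 4000 in
set_option synthInstance.maxHeartbeats 1000000 in
set_option maxRecDepth 1000000 in
set_option maxHeartbeats 4000000 in
theorem npChunk5 : ∀ i j k : Fin 9, (i,j,k) ∈ npL5 → npP i j k := by decide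

set_option synthInstance.maxSize 4000 in
set_option synthInstance.maxHeartbeats 1000000 in
set_option maxRecDepth 1000000 in
set_option maxHeartbeats 4000000 in
theorem npChunk6 : ∀ i j k : Fin 9, (i,j,k) ∈ npL6 → npP i j k := by decide

set_option synthInstance.maxSize 4000 in
set_option synthInstance.maxHeartbeats 1000000 in
set_option maxRecDepth 1000000 in
set_option maxHeartbeats 4000000 in
theorem npChunk7 : ∀ i j k : Fin 9, (i,j,k) ∈ npL7 → npP i j k := by decide

theorem npPall : ∀ i j k : Fin 9, (i,j,k) ∈ npLall → npP i j k := by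
  intro i j k h
  simp only [npLall, List.mem_append] at h
  rcases h with ((((((h|h)|h)|h)|h)|h)|h)|h
  · exact npChunk0 i j k h
  · exact npChunk1 i j k h
  · exact npChunk2 i j k h
  · exact npChunk3 i j k h
  · exact npChunk4 i j k h
  · exact npChunk5 i j k h
  · exact npChunk6 i j k h
  · exact npChunk7 i j k h

set_option synthInstance.maxSize 4000 in
set_option synthInstance.maxHeartbeats 1000000 in
set_option maxRecDepth 1000000 in
set_option maxHeartbeats 4000000 in
theorem npSortedMem : ∀ i j k : Fin 9, i < j → j < k →
    ({i, j, k} : Finset (Fin 9)) ∉ S0 → (i, j, k) ∈ npLall := by decide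

theorem npP_swap12 (i j k : Fin 9) (h : npP i j k) : npP j i k :=
  fun x y w z u v h1 h2 h3 => h x y w z u v h2 h1 h3

theorem npP_swap23 (i j k : Fin 9) (h : npP i j k) : npP i k j :=
  fun x y w z u v h1 h2 h3 => h x y w z u v h1 h3 h2

theorem finset_swap12 (i j k : Fin 9) : ({j, i, k} : Finset (Fin 9)) = {i, j, k} := by
  ext t; simp only [Finset.mem_insert, Finset.mem_singleton]; tauto

theorem finset_swap23 (i j k : Fin 9) : ({i, k, j} : Finset (Fin 9)) = {i, j, k} := by
  ext t; simp only [Finset.mem_insert, Finset.mem_singleton]; tauto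

theorem npGood : ∀ i j k : Fin 9, i ≠ j → i ≠ k → j ≠ k →
    ({i, j, k} : Finset (Fin 9)) ∉ S0 → npP i j k := by
  intro i j k hij hik hjk hS
  rcases lt_trichotomy i j with h1 | h1 | h1
  · rcases lt_trichotomy j k with h2 | h2 | h2
    · -- i < j < k
      exact npPall i j k (npSortedMem i j k h1 h2 hS)
    · exact absurd h2 hjk
    · rcases lt_trichotomy i k with h3 | h3 | h3
      · -- i < k < j
        have hS' : ({i, k, j} : Finset (Fin 9)) ∉ S0 := by rw [finset_swap23]; exact hS
        exact npP_swap23 i k j (npPall i k j (npSortedMem i k j h3 h2 hS'))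
      · exact absurd h3 hik
      · -- k < i < j
        have e : ({k, i, j} : Finset (Fin 9)) = {i, j, k} := by
          ext t; simp only [Finset.mem_insert, Finset.mem_singleton]; tauto
        have hS' : ({k, i, j} : Finset (Fin 9)) ∉ S0 := by rw [e]; exact hS
        have := npPall k i j (npSortedMem k i j h3 h1 hS')
        exact npP_swap23 i k j (npP_swap12 k i j this)
  · exact absurd h1 hij
  · rcases lt_trichotomy i k with h2 | h2 | h2
    · -- j < i < k
      have hS' : ({j, i, k} : Finset (Fin 9)) ∉ S0 := by rw [finset_swap12]; exact hS
      exact npP_swap12 j i k (npPall j i k (npSortedMem j i k h1 h2 hS'))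
    · exact absurd h2 hik
    · rcases lt_trichotomy j k with h3 | h3 | h3
      · -- j < k < i
        have e : ({j, k, i} : Finset (Fin 9)) = {i, j, k} := by
          ext t; simp only [Finset.mem_insert, Finset.mem_singleton]; tauto
        have hS' : ({j, k, i} : Finset (Fin 9)) ∉ S0 := by rw [e]; exact hS
        have := npPall j k i (npSortedMem j k i h3 h2 hS')
        exact npP_swap12 j i k (npP_swap23 j k i this)
      · exact absurd h3 hjk
      · -- k < j < i
        have e : ({k, j, i} : Finset (Fin 9)) = {i, j, k} := by
          ext t; simp only [Finset.mem_insert, Finset.mem_singleton]; tauto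
        have hS' : ({k, j, i} : Finset (Fin 9)) ∉ S0 := by rw [e]; exact hS
        have := npPall k j i (npSortedMem k j i h3 h1 hS')
        exact npP_swap12 j i k (npP_swap23 j k i (npP_swap12 k j i this))

theorem npBridge (i : Fin 9) (X : Fin 3 → Fin 2 → ZMod 3) :
    npG i (X 0 0) (X 0 1) (X 1 0) (X 1 1) (X 2 0) (X 2 1)
      = (nonPappusMap i X 0, nonPappusMap i X 1) := by
  fin_cases i <;> rfl

theorem npEq0 : nonPappusMap 0 = fun X : Fin 3 → Fin 2 → ZMod 3 => ![X 0 0, X 0 1] := rfl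

theorem npLinear0 : IsLinearMap (ZMod 3) (nonPappusMap 0) := by
  rw [npEq0]
  constructor
  · intro X Y; funext c; fin_cases c <;> simp [Pi.add_apply] <;> ring
  · intro m X; funext c; fin_cases c <;> simp [Pi.smul_apply, smul_eq_mul] <;> ring

theorem npEq1 : nonPappusMap 1 = fun X : Fin 3 → Fin 2 → ZMod 3 => ![X 0 0 + X 1 0, X 0 1 + X 1 1] := rfl

theorem npLinear1 : IsLinearMap (ZMod 3) (nonPappusMap 1) := by
  rw [npEq1]
  constructor
  · intro X Y; funext c; fin_cases c <;> simp [Pi.add_apply] <;> ring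
  · intro m X; funext c; fin_cases c <;> simp [Pi.smul_apply, smul_eq_mul] <;> ring

theorem npEq2 : nonPappusMap 2 = fun X : Fin 3 → Fin 2 → ZMod 3 => ![X 1 0, X 1 1] := rfl

theorem npLinear2 : IsLinearMap (ZMod 3) (nonPappusMap 2) := by
  rw [npEq2]
  constructor
  · intro X Y; funext c; fin_cases c <;> simp [Pi.add_apply] <;> ring
  · intro m X; funext c; fin_cases c <;> simp [Pi.smul_apply, smul_eq_mul] <;> ring

theorem npEq3 : nonPappusMap 3 = fun X : Fin 3 → Fin 2 → ZMod 3 => ![X 0 0 + X 2 0 + 2 * X 1 1, X 0 1 + 2 * X 2 1 + X 1 0 + X 1 1] := rfl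

theorem npLinear3 : IsLinearMap (ZMod 3) (nonPappusMap 3) := by
  rw [npEq3]
  constructor
  · intro X Y; funext c; fin_cases c <;> simp [Pi.add_apply] <;> ring
  · intro m X; funext c; fin_cases c <;> simp [Pi.smul_apply, smul_eq_mul] <;> ring

theorem npEq4 : nonPappusMap 4 = fun X : Fin 3 → Fin 2 → ZMod 3 => ![X 2 0, X 2 1] := rfl

theorem npLinear4 : IsLinearMap (ZMod 3) (nonPappusMap 4) := by
  rw [npEq4]
  constructor
  · intro X Y; funext c; fin_cases c <;> simp [Pi.add_apply] <;> ring
  · intro m X; funext c; fin_cases c <;> simp [Pi.smul_apply, smul_eq_mul] <;> ring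

theorem npEq5 : nonPappusMap 5 = fun X : Fin 3 → Fin 2 → ZMod 3 => ![X 0 0 + 2 * X 2 0 + 2 * X 2 1 + 2 * X 1 1, X 0 1 + X 2 0 + X 1 0 + X 1 1] := rfl

theorem npLinear5 : IsLinearMap (ZMod 3) (nonPappusMap 5) := by
  rw [npEq5]
  constructor
  · intro X Y; funext c; fin_cases c <;> simp [Pi.add_apply] <;> ring
  · intro m X; funext c; fin_cases c <;> simp [Pi.smul_apply, smul_eq_mul] <;> ring

theorem npEq6 : nonPappusMap 6 = fun X : Fin 3 → Fin 2 → ZMod 3 => ![X 0 0 + X 2 1, X 0 1 + X 2 0 + 2 * X 2 1] := rfl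

theorem npLinear6 : IsLinearMap (ZMod 3) (nonPappusMap 6) := by
  rw [npEq6]
  constructor
  · intro X Y; funext c; fin_cases c <;> simp [Pi.add_apply] <;> ring
  · intro m X; funext c; fin_cases c <;> simp [Pi.smul_apply, smul_eq_mul] <;> ring

theorem npEq7 : nonPappusMap 7 = fun X : Fin 3 → Fin 2 → ZMod 3 => ![X 0 0 + X 2 0 + X 1 0 + X 1 1, X 0 1 + 2 * X 2 1 + X 1 0] := rfl

theorem npLinear7 : IsLinearMap (ZMod 3) (nonPappusMap 7) := by
  rw [npEq7]
  constructor
  · intro X Y; funext c; fin_cases c <;> simp [Pi.add_apply] <;> ring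
  · intro m X; funext c; fin_cases c <;> simp [Pi.smul_apply, smul_eq_mul] <;> ring

theorem npEq8 : nonPappusMap 8 = fun X : Fin 3 → Fin 2 → ZMod 3 => ![X 2 0 + X 1 0, X 2 1 + X 1 1] := rfl

theorem npLinear8 : IsLinearMap (ZMod 3) (nonPappusMap 8) := by
  rw [npEq8]
  constructor
  · intro X Y; funext c; fin_cases c <;> simp [Pi.add_apply] <;> ring
  · intro m X; funext c; fin_cases c <;> simp [Pi.smul_apply, smul_eq_mul] <;> ring

theorem npLinear : ∀ i : Fin 9, IsLinearMap (ZMod 3) (nonPappusMap i) := by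
  intro i
  fin_cases i
  exacts [npLinear0, npLinear1, npLinear2, npLinear3, npLinear4, npLinear5, npLinear6,
    npLinear7, npLinear8]

theorem npInj (i j k : Fin 9) (hij : i ≠ j) (hik : i ≠ k) (hjk : j ≠ k)
    (hS : ({i, j, k} : Finset (Fin 9)) ∉ S0) :
    Function.Bijective fun X : Fin 3 → Fin 2 → ZMod 3 =>
      (nonPappusMap i X, nonPappusMap j X, nonPappusMap k X) := by
  rw [Fintype.bijective_iff_injective_and_card]
  refine ⟨?_, by simp⟩
  intro X Y h
  simp only [Prod.mk.injEq] at h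
  obtain ⟨h1, h2, h3⟩ := h
  have e1 : nonPappusMap i (X - Y) = 0 := by
    rw [(npLinear i).map_sub, h1, sub_self]
  have e2 : nonPappusMap j (X - Y) = 0 := by
    rw [(npLinear j).map_sub, h2, sub_self]
  have e3 : nonPappusMap k (X - Y) = 0 := by
    rw [(npLinear k).map_sub, h3, sub_self]
  set D := X - Y with hD
  have key := npGood i j k hij hik hjk hS (D 0 0) (D 0 1) (D 1 0) (D 1 1) (D 2 0) (D 2 1)
    (by rw [npBridge, e1]; rfl) (by rw [npBridge, e2]; rfl) (by rw [npBridge, e3]; rfl)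
  have hD0 : D = 0 := by
    funext a b
    fin_cases a <;> fin_cases b <;> simp only [Pi.zero_apply] <;> tauto
  exact sub_eq_zero.mp hD0

----------------------------------------------------------------

theorem npLineSpan (g : Fin 9 → (Fin 3 → Fin 2 → ZMod 3) →ₗ[ZMod 3] (Fin 2 → ZMod 3))
    (i j k : Fin 9) (a : Fin 2 → Fin 4 → ZMod 3)
    (ha : ∀ c : Fin 2, (LinearMap.proj c).comp (g k) =
      a c 0 • (LinearMap.proj 0).comp (g i) + a c 1 • (LinearMap.proj 1).comp (g i) +
      a c 2 • (LinearMap.proj 0).comp (g j) + a c 3 • (LinearMap.proj 1).comp (g j)) :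
    Module.finrank (ZMod 3) (Submodule.span (ZMod 3)
      {φ : Module.Dual (ZMod 3) (Fin 3 → Fin 2 → ZMod 3) |
        ∃ t ∈ ({i, j, k} : Finset (Fin 9)), ∃ c : Fin 2,
          φ = (LinearMap.proj c).comp (g t)}) ≤ 4 := by
  set b : Fin 4 → Module.Dual (ZMod 3) (Fin 3 → Fin 2 → ZMod 3) :=
    ![(LinearMap.proj 0).comp (g i), (LinearMap.proj 1).comp (g i),
      (LinearMap.proj 0).comp (g j), (LinearMap.proj 1).comp (g j)] with hb
  have hle : Submodule.span (ZMod 3)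
      {φ : Module.Dual (ZMod 3) (Fin 3 → Fin 2 → ZMod 3) |
        ∃ t ∈ ({i, j, k} : Finset (Fin 9)), ∃ c : Fin 2,
          φ = (LinearMap.proj c).comp (g t)} ≤ Submodule.span (ZMod 3) (Set.range b) := by
    rw [Submodule.span_le]
    rintro φ ⟨t, ht, c, rfl⟩
    simp only [Finset.mem_insert, Finset.mem_singleton] at ht
    rcases ht with rfl | rfl | rfl
    · apply Submodule.subset_span
      fin_cases c
      · exact ⟨0, rfl⟩
      · exact ⟨1, rfl⟩
    · apply Submodule.subset_span
      fin_cases c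
      · exact ⟨2, rfl⟩
      · exact ⟨3, rfl⟩
    · rw [ha c]
      have memb : ∀ m : Fin 4, b m ∈ Submodule.span (ZMod 3) (Set.range b) :=
        fun m => Submodule.subset_span ⟨m, rfl⟩
      exact add_mem (add_mem (add_mem
        (Submodule.smul_mem _ _ (memb 0)) (Submodule.smul_mem _ _ (memb 1)))
        (Submodule.smul_mem _ _ (memb 2))) (Submodule.smul_mem _ _ (memb 3))
  calc Module.finrank (ZMod 3) _ ≤ Module.finrank (ZMod 3)
        (Submodule.span (ZMod 3) (Set.range b)) := Submodule.finrank_mono hle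
    _ ≤ Fintype.card (Fin 4) := by
        simpa [Set.finrank] using finrank_range_le_card (R := ZMod 3) b
    _ = 4 := by simp

theorem npSpanAux (g : Fin 9 → (Fin 3 → Fin 2 → ZMod 3) →ₗ[ZMod 3] (Fin 2 → ZMod 3))
    (hg : ∀ i : Fin 9, ⇑(g i) = nonPappusMap i) :
    ∀ s ∈ S0, Module.finrank (ZMod 3) (Submodule.span (ZMod 3)
      {φ : Module.Dual (ZMod 3) (Fin 3 → Fin 2 → ZMod 3) |
        ∃ t ∈ s, ∃ c : Fin 2, φ = (LinearMap.proj c).comp (g t)}) ≤ 4 := by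
  have key : ∀ (kk ii jj : Fin 9) (a : Fin 2 → Fin 4 → ZMod 3),
      (∀ (c : Fin 2) (X : Fin 3 → Fin 2 → ZMod 3),
        nonPappusMap kk X c = a c 0 * nonPappusMap ii X 0 + a c 1 * nonPappusMap ii X 1 +
          a c 2 * nonPappusMap jj X 0 + a c 3 * nonPappusMap jj X 1) →
      ∀ c : Fin 2, (LinearMap.proj c).comp (g kk) =
        a c 0 • (LinearMap.proj 0).comp (g ii) + a c 1 • (LinearMap.proj 1).comp (g ii) +
        a c 2 • (LinearMap.proj 0).comp (g jj) + a c 3 • (LinearMap.proj 1).comp (g jj) := by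
    intro kk ii jj a hnp c
    apply LinearMap.ext
    intro X
    simp only [LinearMap.comp_apply, LinearMap.proj_apply, LinearMap.add_apply,
      LinearMap.smul_apply, smul_eq_mul, hg]
    exact hnp c X
  intro s hs
  simp only [S0, Finset.mem_insert, Finset.mem_singleton] at hs
  rcases hs with rfl | rfl | rfl | rfl | rfl | rfl | rfl | rfl
  · exact npLineSpan g 0 1 2 ![![2,0,1,0], ![0,2,0,1]]
      (key 2 0 1 _ (by intro c X; fin_cases c <;> (simp [nonPappusMap]; generalize X 0 0 = x0; generalize X 0 1 = x1; generalize X 1 0 = x2; generalize X 1 1 = x3; generalize X 2 0 = x4; generalize X 2 1 = x5; revert x0 x1 x2 x3 x4 x5; decide)))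
  · exact npLineSpan g 0 4 6 ![![1,0,0,1], ![0,1,1,2]]
      (key 6 0 4 _ (by intro c X; fin_cases c <;> simp [nonPappusMap]))
  · exact npLineSpan g 2 4 8 ![![1,0,1,0], ![0,1,0,1]]
      (key 8 2 4 _ (by intro c X; fin_cases c <;> (simp [nonPappusMap]; generalize X 0 0 = x0; generalize X 0 1 = x1; generalize X 1 0 = x2; generalize X 1 1 = x3; generalize X 2 0 = x4; generalize X 2 1 = x5; revert x0 x1 x2 x3 x4 x5; decide)))
  · exact npLineSpan g 1 3 6 ![![1,1,0,2], ![2,0,1,1]]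
      (key 6 1 3 _ (by intro c X; fin_cases c <;> (simp [nonPappusMap]; generalize X 0 0 = x0; generalize X 0 1 = x1; generalize X 1 0 = x2; generalize X 1 1 = x3; generalize X 2 0 = x4; generalize X 2 1 = x5; revert x0 x1 x2 x3 x4 x5; decide)))
  · exact npLineSpan g 3 4 5 ![![1,0,1,2], ![0,1,1,1]]
      (key 5 3 4 _ (by intro c X; fin_cases c <;> (simp [nonPappusMap]; generalize X 0 0 = x0; generalize X 0 1 = x1; generalize X 1 0 = x2; generalize X 1 1 = x3; generalize X 2 0 = x4; generalize X 2 1 = x5; revert x0 x1 x2 x3 x4 x5; decide)))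
  · exact npLineSpan g 1 5 8 ![![0,2,0,1], ![1,1,2,2]]
      (key 8 1 5 _ (by intro c X; fin_cases c <;> (simp [nonPappusMap]; generalize X 0 0 = x0; generalize X 0 1 = x1; generalize X 1 0 = x2; generalize X 1 1 = x3; generalize X 2 0 = x4; generalize X 2 1 = x5; revert x0 x1 x2 x3 x4 x5; decide)))
  · exact npLineSpan g 0 5 7 ![![1,2,0,1], ![2,0,1,1]]
      (key 7 0 5 _ (by intro c X; fin_cases c <;> (simp [nonPappusMap]; generalize X 0 0 = x0; generalize X 0 1 = x1; generalize X 1 0 = x2; generalize X 1 1 = x3; generalize X 2 0 = x4; generalize X 2 1 = x5; revert x0 x1 x2 x3 x4 x5; decide)))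
  · exact npLineSpan g 2 3 7 ![![1,2,1,0], ![0,2,0,1]]
      (key 7 2 3 _ (by intro c X; fin_cases c <;> (simp [nonPappusMap]; generalize X 0 0 = x0; generalize X 0 1 = x1; generalize X 1 0 = x2; generalize X 1 1 = x3; generalize X 2 0 = x4; generalize X 2 1 = x5; revert x0 x1 x2 x3 x4 x5; decide)))

/-- the maps `f_1, …, f_9` are `F_3`-linear, and, for every 3-element
subset `{i, j, k}` of `{1, …, 9}`: if `{i, j, k} ∉ S0` then the linear map
`X ↦ (f_i(X), f_j(X), f_k(X))` on `(F_3^2)^3` is bijective, while if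
`{i, j, k} ∈ S0` then the six component linear functionals of `f_i, f_j, f_k` span a
subspace of dimension at most `4` of the dual of `F_3^6`.  Thus `f_1, …, f_9` form a
multilinear (partition) representation of the non-Pappus matroid over `F_3` with
blocks of dimension `2`. -/
theorem nonPappus_multilinear_representation :
    (∀ i : Fin 9, IsLinearMap (ZMod 3) (nonPappusMap i)) ∧
    ∀ g : Fin 9 → (Fin 3 → Fin 2 → ZMod 3) →ₗ[ZMod 3] (Fin 2 → ZMod 3),
      (∀ i : Fin 9, ⇑(g i) = nonPappusMap i) →
      ∀ i j k : Fin 9, i ≠ j → i ≠ k → j ≠ k →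
        (({i, j, k} : Finset (Fin 9)) ∉ S0 →
          Function.Bijective fun X : Fin 3 → Fin 2 → ZMod 3 =>
            (nonPappusMap i X, nonPappusMap j X, nonPappusMap k X)) ∧
        (({i, j, k} : Finset (Fin 9)) ∈ S0 →
          Module.finrank (ZMod 3) (Submodule.span (ZMod 3)
            {φ : Module.Dual (ZMod 3) (Fin 3 → Fin 2 → ZMod 3) |
              ∃ t ∈ ({i, j, k} : Finset (Fin 9)), ∃ c : Fin 2,
                φ = (LinearMap.proj c).comp (g t)}) ≤ 4) := by
  refine ⟨npLinear, ?_⟩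
  intro g hg i j k hij hik hjk
  exact ⟨fun hS => npInj i j k hij hik hjk hS,
         fun hS => npSpanAux g hg {i, j, k} hS⟩
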